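/- The square loss ℓ(a, y) = ‖a - y‖²/2 on the Euclidean ball B(0, Y) ⊂ ℝ^d is η-mixable with η = 1/(4Y²) and the mean as substitution function: for every probability distribution P on B(0, Y) and every y ∈ B(0, Y), ‖E_{a∼P}[a] - y‖²/2 ≤ -4Y² · ln E_{a∼P}[ exp( -‖a - y‖²/(8Y²) ) ]. -/

import Mathlib

open MeasureTheory Real

/-- 1-D lemma: `t ↦ exp (-(c*(A t² + B t + C)))` is concave on `[0,1]` provided the
quadratic is nonnegative (disc ≤ 0) and `c*q ≤ 1/2` on `[0,1]`. -/
lemma exp_neg_quadratic_concaveOn (c A B C : ℝ) (hA : 0 ≤ A) (hc : 0 < c)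
    (hdisc : B ^ 2 ≤ 4 * A * C)
    (hq : ∀ t ∈ Set.Icc (0:ℝ) 1, c * (A * t ^ 2 + B * t + C) ≤ 1 / 2) :
    ConcaveOn ℝ (Set.Icc (0:ℝ) 1)
      (fun t => Real.exp (-(c * (A * t ^ 2 + B * t + C)))) := by
  set f : ℝ → ℝ := fun t => Real.exp (-(c * (A * t ^ 2 + B * t + C))) with hf
  have hderiv : ∀ t : ℝ, HasDerivAt f
      (Real.exp (-(c * (A * t ^ 2 + B * t + C))) * (-(c * (2 * A * t + B)))) t := by
    intro t
    have hq' : HasDerivAt (fun t : ℝ => -(c * (A * t ^ 2 + B * t + C)))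
        (-(c * (2 * A * t + B))) t := by
      have : HasDerivAt (fun t : ℝ => A * t ^ 2 + B * t + C) (2 * A * t + B) t := by
        have h1 : HasDerivAt (fun t : ℝ => A * t ^ 2) (A * (2 * t)) t :=
          (hasDerivAt_pow 2 t).const_mul A |>.congr_deriv (by ring) 
        have h2 : HasDerivAt (fun t : ℝ => B * t) B t := (hasDerivAt_id t).const_mul B |>.congr_deriv (by ring)
        have := (h1.add h2).add_const C
        exact this.congr_deriv (by ring)
      exact ((this.const_mul c).neg).congr_deriv (by ring)
    exact hq'.exp
  have hderiv_eq : deriv f = fun t =>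
      Real.exp (-(c * (A * t ^ 2 + B * t + C))) * (-(c * (2 * A * t + B))) := by
    funext t; exact (hderiv t).deriv
  have hderiv2 : ∀ t : ℝ, HasDerivAt (deriv f)
      (Real.exp (-(c * (A * t ^ 2 + B * t + C))) *
        ((c * (2 * A * t + B)) ^ 2 - 2 * c * A)) t := by
    intro t
    rw [hderiv_eq]
    have h1 := hderiv t
    have h2 : HasDerivAt (fun t : ℝ => -(c * (2 * A * t + B))) (-(c * (2 * A))) t := by
      have : HasDerivAt (fun t : ℝ => 2 * A * t + B) (2 * A) t :=
        ((hasDerivAt_id t).const_mul (2 * A)).add_const B |>.congr_deriv (by ring)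
      exact (this.const_mul c).neg |>.congr_deriv (by ring)
    have := h1.mul h2
    exact this.congr_deriv (by ring)
  apply concaveOn_of_deriv2_nonpos' (convex_Icc 0 1)
  · intro t _; exact (hderiv t).differentiableAt.differentiableWithinAt
  · intro t _; exact (hderiv2 t).differentiableAt.differentiableWithinAt
  · intro t ht
    have h2 : deriv (deriv f) t =
        Real.exp (-(c * (A * t ^ 2 + B * t + C))) *
          ((c * (2 * A * t + B)) ^ 2 - 2 * c * A) := (hderiv2 t).deriv
    simp only [Function.iterate_succ, Function.iterate_zero, Function.comp_apply, id_eq]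
    rw [h2]
    apply mul_nonpos_of_nonneg_of_nonpos (Real.exp_pos _).le
    have hkey : (2 * A * t + B) ^ 2 ≤ 4 * A * (A * t ^ 2 + B * t + C) := by
      nlinarith [sq_nonneg (2 * A * t + B)]
    have hcq := hq t ht
    have h3 : c ^ 2 * (2 * A * t + B) ^ 2 ≤ c ^ 2 * (4 * A * (A * t ^ 2 + B * t + C)) :=
      mul_le_mul_of_nonneg_left hkey (by positivity)
    have h4 : (4 * A * c) * (c * (A * t ^ 2 + B * t + C)) ≤ (4 * A * c) * (1 / 2) :=
      mul_le_mul_of_nonneg_left hcq (by positivity)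
    nlinarith [h3, h4]


open RealInnerProductSpace in
lemma exp_neg_sq_concaveOn {d : ℕ} (Y : ℝ) (hY : 0 < Y)
    (y : EuclideanSpace ℝ (Fin d)) (hy : ‖y‖ ≤ Y) :
    ConcaveOn ℝ (Metric.closedBall (0 : EuclideanSpace ℝ (Fin d)) Y)
      (fun a => Real.exp (-‖a - y‖ ^ 2 / (8 * Y ^ 2))) := by
  refine ⟨convex_closedBall 0 Y, ?_⟩
  intro a ha b hb s t hs ht hst
  set c : ℝ := 1 / (8 * Y ^ 2) with hc
  have hc0 : 0 < c := by positivity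
  set A : ℝ := ‖b - a‖ ^ 2 with hA
  set B : ℝ := 2 * ⟪a - y, b - a⟫ with hB
  set C : ℝ := ‖a - y‖ ^ 2 with hC
  -- the quadratic expansion
  have hquad : ∀ θ : ℝ, ‖a + θ • (b - a) - y‖ ^ 2 = A * θ ^ 2 + B * θ + C := by
    intro θ
    have h0 : a + θ • (b - a) - y = (a - y) + θ • (b - a) := by abel
    rw [h0, norm_add_sq_real, real_inner_smul_right, norm_smul, mul_pow, Real.norm_eq_abs, sq_abs,
      hA, hB, hC]
    ring
  have hCS : B ^ 2 ≤ 4 * A * C := by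
    have h := real_inner_mul_inner_self_le (a - y) (b - a)
    rw [real_inner_self_eq_norm_sq, real_inner_self_eq_norm_sq] at h
    rw [hA, hB, hC]
    nlinarith [h]
  have hbound : ∀ θ ∈ Set.Icc (0:ℝ) 1, c * (A * θ ^ 2 + B * θ + C) ≤ 1 / 2 := by
    intro θ hθ
    have hmem : (1 - θ) • a + θ • b ∈ Metric.closedBall (0 : EuclideanSpace ℝ (Fin d)) Y :=
      (convex_closedBall (0 : EuclideanSpace ℝ (Fin d)) Y) ha hb
        (by linarith [hθ.2]) hθ.1 (by ring)
    have heq : a + θ • (b - a) = (1 - θ) • a + θ • b := by module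
    have hnorm : ‖a + θ • (b - a) - y‖ ≤ 2 * Y := by
      calc ‖a + θ • (b - a) - y‖ ≤ ‖a + θ • (b - a)‖ + ‖y‖ := norm_sub_le _ _
      _ ≤ Y + Y := by
          refine add_le_add ?_ hy
          rw [heq]; exact mem_closedBall_zero_iff.mp hmem
      _ = 2 * Y := by ring
    have hle : A * θ ^ 2 + B * θ + C ≤ 4 * Y ^ 2 := by
      rw [← hquad]
      nlinarith [norm_nonneg (a + θ • (b - a) - y)]
    rw [hc, div_mul_eq_mul_div, one_mul, div_le_div_iff₀ (by positivity) (by norm_num)]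
    nlinarith
  have hconc := exp_neg_quadratic_concaveOn c A B C (by rw [hA]; positivity) hc0 hCS hbound
  have hkey := hconc.2 (Set.mem_Icc.mpr ⟨le_refl 0, by norm_num⟩)
    (Set.mem_Icc.mpr ⟨by norm_num, le_refl 1⟩) hs ht hst
  simp only [smul_eq_mul, mul_zero, mul_one, zero_add] at hkey
  have ea : -‖a - y‖ ^ 2 / (8 * Y ^ 2) = -(c * (A * (0:ℝ) ^ 2 + B * 0 + C)) := by
    rw [hc, hC]; ring
  have eb : -‖b - y‖ ^ 2 / (8 * Y ^ 2) = -(c * (A * (1:ℝ) ^ 2 + B * 1 + C)) := by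
    have h1 := hquad 1
    have h2 : a + (1:ℝ) • (b - a) = b := by module
    rw [h2] at h1
    rw [hc, h1]; ring
  have et : -‖s • a + t • b - y‖ ^ 2 / (8 * Y ^ 2) = -(c * (A * t ^ 2 + B * t + C)) := by
    have h1 := hquad t
    have h2 : a + t • (b - a) = s • a + t • b := by
      have hs1 : s = 1 - t := by linarith
      rw [hs1]; module
    rw [h2] at h1
    rw [hc, h1]; ring
  simp only [smul_eq_mul]
  rw [ea, eb, et]
  simpa using hkey


/-- The square loss `‖a-y‖²/2` on the Euclidean ball `B(0,Y) ⊂ ℝ^d` is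
`1/(4Y²)`-mixable with the mean as substitution function: for every probability
distribution `P` supported on `B(0,Y)` and every `y ∈ B(0,Y)`,
`‖E_P[a] - y‖²/2 ≤ -4Y² · ln E_P[exp(-‖a-y‖²/(8Y²))]`. -/
theorem square_loss_mixable
    (d : ℕ) (Y : ℝ) (hY : 0 < Y)
    (P : Measure (EuclideanSpace ℝ (Fin d))) [IsProbabilityMeasure P]
    (hsupp : ∀ᵐ a ∂P, ‖a‖ ≤ Y)
    (y : EuclideanSpace ℝ (Fin d)) (hy : ‖y‖ ≤ Y) :
    ‖(∫ a, a ∂P) - y‖ ^ 2 / 2 ≤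
      -(4 * Y ^ 2) * Real.log (∫ a, Real.exp (-‖a - y‖ ^ 2 / (8 * Y ^ 2)) ∂P) := by
  set F : EuclideanSpace ℝ (Fin d) → ℝ :=
    fun a => Real.exp (-‖a - y‖ ^ 2 / (8 * Y ^ 2)) with hF
  have hsupp' : ∀ᵐ a ∂P, a ∈ Metric.closedBall (0 : EuclideanSpace ℝ (Fin d)) Y :=
    hsupp.mono fun a h => mem_closedBall_zero_iff.mpr h
  have hFcont : Continuous F := by
    apply Real.continuous_exp.comp
    fun_prop
  have hInt_id : Integrable (fun a => a) P := by
    refine Integrable.mono' (integrable_const Y) aestronglyMeasurable_id ?_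
    exact hsupp
  have hInt_F : Integrable (fun a => F a) P := by
    refine Integrable.mono' (integrable_const 1) (hFcont.aestronglyMeasurable) ?_
    filter_upwards with a
    rw [Real.norm_eq_abs, abs_of_pos (Real.exp_pos _)]
    apply Real.exp_le_one_iff.mpr
    have : (0:ℝ) ≤ ‖a - y‖ ^ 2 / (8 * Y ^ 2) := by positivity
    rw [neg_div]
    linarith
  have hjen : (∫ a, F a ∂P) ≤ F (∫ a, a ∂P) :=
    (exp_neg_sq_concaveOn Y hY y hy).le_map_integral hFcont.continuousOn
      Metric.isClosed_closedBall hsupp' hInt_id hInt_F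
  have hlb : ∀ᵐ a ∂P, Real.exp (-(1/2) : ℝ) ≤ F a := by
    filter_upwards [hsupp] with a h
    apply Real.exp_le_exp.mpr
    have hn : ‖a - y‖ ≤ 2 * Y :=
      (norm_sub_le a y).trans (by linarith)
    have hsq : ‖a - y‖ ^ 2 ≤ 4 * Y ^ 2 := by nlinarith [norm_nonneg (a - y)]
    rw [neg_div, neg_le_neg_iff, div_le_div_iff₀ (by positivity) (by norm_num)]
    nlinarith
  have hpos : 0 < ∫ a, F a ∂P := by
    have h1 : Real.exp (-(1/2) : ℝ) ≤ ∫ a, F a ∂P := by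
      have := integral_mono_ae (integrable_const (Real.exp (-(1/2):ℝ))) hInt_F hlb
      simpa using this
    exact lt_of_lt_of_le (Real.exp_pos _) h1
  have hlog : Real.log (∫ a, F a ∂P) ≤ -‖(∫ a, a ∂P) - y‖ ^ 2 / (8 * Y ^ 2) := by
    calc Real.log (∫ a, F a ∂P) ≤ Real.log (F (∫ a, a ∂P)) :=
          Real.log_le_log hpos hjen
      _ = -‖(∫ a, a ∂P) - y‖ ^ 2 / (8 * Y ^ 2) := Real.log_exp _
  have hmul := mul_le_mul_of_nonneg_left hlog (by positivity : (0:ℝ) ≤ 4 * Y ^ 2)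
  have heq : (4 * Y ^ 2) * (-‖(∫ a, a ∂P) - y‖ ^ 2 / (8 * Y ^ 2)) =
      -(‖(∫ a, a ∂P) - y‖ ^ 2 / 2) := by
    field_simp
    ring
  rw [heq] at hmul
  linarith
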